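/- Let k be a field of characteristic ℓ > 0 and let q ∈ k be a root of unity of order w. Define b_0 = 1 and, if w > 1, b_i = w·ℓ^{i-1} for i > 0; if w = 1, b_i = ℓ^i. Then the k-algebra homomorphism k[y_0, y_1, ...]/(y_i^{b_{i+1}/b_i}) → D given by y_i ↦ x^{[b_i]} is an isomorphism onto the q-divided power algebra D. -/

import Mathlib

noncomputable def qPoly (n : ℕ) : Polynomial ℤ :=
  ∑ i ∈ Finset.range n, Polynomial.X ^ i

noncomputable def qFact (n : ℕ) : Polynomial ℤ :=
  ∏ i ∈ Finset.range n, qPoly (i + 1)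

noncomputable def gaussPoly (n m : ℕ) : Polynomial ℤ :=
  Polynomial.divByMonic (qFact n) (qFact m * qFact (n - m))

/-- The Gaussian binomial coefficient `[n choose m]_q` in a commutative ring `k`. -/
noncomputable def qBinom (k : Type*) [CommRing k] (q : k) (n m : ℕ) : k :=
  Polynomial.eval₂ (Int.castRingHom k) q (gaussPoly n m)

/-- Right multiplication by `g` on the free `k`-module `D = ⊕_{n ≥ 0} k·x^{[n]}`
(realized as `ℕ →₀ k`, with `x^{[n]}` the basis vector `single n 1`), extending
`x^{[a]} · x^{[b]} = [a+b choose a]_q x^{[a+b]}` bilinearly. -/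
noncomputable def mulRightL {k : Type*} [CommRing k] (q : k) (g : ℕ →₀ k) :
    (ℕ →₀ k) →ₗ[k] (ℕ →₀ k) :=
  Finsupp.lsum k fun a =>
    g.sum fun b cb =>
      (qBinom k q (a + b) a * cb) • (Finsupp.lsingle (a + b) : k →ₗ[k] (ℕ →₀ k))

/-- The multiplication of the `q`-divided power algebra `D`. -/
noncomputable def Dmul {k : Type*} [CommRing k] (q : k) (f g : ℕ →₀ k) : ℕ →₀ k :=
  mulRightL q g f

/-- The sequence `b_0 = 1`, and for `i > 0`: `b_i = w·ℓ^{i-1}` if `w > 1`, `b_i = ℓ^i`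
if `w = 1`. -/
def bSeq (w ℓ : ℕ) : ℕ → ℕ := fun i =>
  if i = 0 then 1 else if 1 < w then w * ℓ ^ (i - 1) else ℓ ^ i

/-- Powers in the `q`-divided power algebra `D`. -/
noncomputable def Dpow {k : Type*} [CommRing k] (q : k) (f : ℕ →₀ k) : ℕ → (ℕ →₀ k)
  | 0 => Finsupp.single 0 1
  | n + 1 => Dmul q (Dpow q f n) f

/-- The image in `D` of the monomial `∏ y_i^{m i}` under `y_i ↦ x^{[b i]}`. -/
noncomputable def Dmon {k : Type*} [CommRing k] (q : k) (b : ℕ → ℕ) (m : ℕ →₀ ℕ) :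
    ℕ →₀ k :=
  (List.range (m.support.sup id + 1)).foldr
    (fun i acc => Dmul q (Dpow q (Finsupp.single (b i) (1 : k)) (m i)) acc)
    (Finsupp.single 0 1)

open Polynomial

noncomputable def gp : ℕ → ℕ → Polynomial ℤ
  | 0, 0 => 1
  | 0, _+1 => 0
  | _+1, 0 => 1
  | n+1, m+1 => gp n (m+1) + X^(n-m) * gp n m

lemma gp_zero_right (n : ℕ) : gp n 0 = 1 := by cases n <;> rfl

lemma gp_eq_zero {n m : ℕ} (h : n < m) : gp n m = 0 := by
  induction n generalizing m with
  | zero => match m, h with | m+1, _ => rfl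
  | succ n ih =>
    match m, h with
    | m+1, h =>
      show gp n (m+1) + X^(n-m) * gp n m = 0
      rw [ih (by omega), ih (by omega)]; ring

lemma gp_diag (n : ℕ) : gp n n = 1 := by
  induction n with
  | zero => rfl
  | succ n ih =>
    show gp n (n+1) + X^(n-n) * gp n n = 1
    rw [gp_eq_zero (by omega), ih]; simp

lemma qPoly_add (a b : ℕ) : qPoly (a + b) = qPoly a + X ^ a * qPoly b := by
  unfold qPoly
  rw [Finset.sum_range_add, Finset.mul_sum]
  simp [pow_add]

lemma qFact_succ (n : ℕ) : qFact (n + 1) = qFact n * qPoly (n + 1) :=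
  Finset.prod_range_succ _ _

lemma qPoly_monic (n : ℕ) : (qPoly (n + 1)).Monic :=
  monic_geom_sum_X (by omega)

lemma qFact_monic (n : ℕ) : (qFact n).Monic :=
  monic_prod_of_monic _ _ fun i _ => qPoly_monic i

lemma gp_fact : ∀ n m : ℕ, m ≤ n → qFact m * qFact (n - m) * gp n m = qFact n := by
  intro n
  induction n with
  | zero => intro m hm; interval_cases m; simp [gp_diag, qFact]
  | succ n ih =>
    intro m hm
    match m with
    | 0 => simp [gp_zero_right, qFact]
    | m+1 =>
      rcases eq_or_lt_of_le hm with h | h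
      · rw [← h]; simp [gp_diag, qFact]
      · have hmn : m + 1 ≤ n := by omega
        have hd : n - m = (n - (m+1)) + 1 := by omega
        show qFact (m+1) * qFact (n + 1 - (m+1)) * (gp n (m+1) + X^(n-m) * gp n m) = qFact (n+1)
        have e1 : n + 1 - (m + 1) = n - m := by omega
        rw [e1, mul_add]
        have t1 : qFact (m+1) * qFact (n - m) * gp n (m+1) = qPoly (n - m) * qFact n := by
          rw [hd, qFact_succ (n - (m+1))]
          have : n - (m + 1) + 1 = n - m := by omega
          rw [this]
          calc qFact (m+1) * (qFact (n - (m+1)) * qPoly (n - m)) * gp n (m+1)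
              = qPoly (n - m) * (qFact (m+1) * qFact (n - (m+1)) * gp n (m+1)) := by ring
            _ = qPoly (n - m) * qFact n := by rw [ih (m+1) hmn]
        have t2 : qFact (m+1) * qFact (n - m) * (X^(n-m) * gp n m) =
            X^(n-m) * qPoly (m+1) * qFact n := by
          rw [qFact_succ m]
          calc qFact m * qPoly (m+1) * qFact (n - m) * (X^(n-m) * gp n m)
              = X^(n-m) * qPoly (m+1) * (qFact m * qFact (n - m) * gp n m) := by ring
            _ = X^(n-m) * qPoly (m+1) * qFact n := by rw [ih m (by omega)]
        rw [t1, t2, qFact_succ n]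
        have : qPoly (n + 1) = qPoly (n - m) + X^(n-m) * qPoly (m+1) := by
          have : n + 1 = (n - m) + (m + 1) := by omega
          rw [this, qPoly_add]
        rw [this]; ring

lemma gaussPoly_eq_gp {n m : ℕ} (h : m ≤ n) : gaussPoly n m = gp n m := by
  unfold gaussPoly
  rw [← gp_fact n m h]
  exact mul_divByMonic_cancel_left _ ((qFact_monic m).mul (qFact_monic (n - m)))

lemma qFact_ne_zero (n : ℕ) : qFact n ≠ 0 := (qFact_monic n).ne_zero

lemma gp_symm {n m : ℕ} (h : m ≤ n) : gp n m = gp n (n - m) := by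
  have h1 := gp_fact n m h
  have h2 := gp_fact n (n - m) (by omega)
  have e : n - (n - m) = m := by omega
  rw [e] at h2
  have : qFact m * qFact (n - m) * gp n m = qFact m * qFact (n - m) * gp n (n - m) := by
    rw [h1]; rw [← h2]; ring
  exact mul_left_cancel₀ (mul_ne_zero (qFact_ne_zero m) (qFact_ne_zero (n - m))) this

lemma gp_assoc (a b c : ℕ) :
    gp (a + b) a * gp (a + b + c) (a + b) = gp (b + c) b * gp (a + b + c) a := by
  have h1 : qFact a * qFact b * qFact c * (gp (a + b) a * gp (a + b + c) (a + b)) =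
      qFact (a + b + c) := by
    have e1 := gp_fact (a + b) a (by omega)
    have e2 := gp_fact (a + b + c) (a + b) (by omega)
    have f1 : a + b - a = b := by omega
    have f2 : a + b + c - (a + b) = c := by omega
    rw [f1] at e1; rw [f2] at e2
    calc qFact a * qFact b * qFact c * (gp (a + b) a * gp (a + b + c) (a + b))
        = (qFact a * qFact b * gp (a+b) a) * qFact c * gp (a+b+c) (a+b) := by ring
      _ = qFact (a+b) * qFact c * gp (a+b+c) (a+b) := by rw [e1]
      _ = qFact (a+b+c) := e2
  have h2 : qFact a * qFact b * qFact c * (gp (b + c) b * gp (a + b + c) a) =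
      qFact (a + b + c) := by
    have e1 := gp_fact (b + c) b (by omega)
    have e2 := gp_fact (a + b + c) a (by omega)
    have f1 : b + c - b = c := by omega
    have f2 : a + b + c - a = b + c := by omega
    rw [f1] at e1; rw [f2] at e2
    calc qFact a * qFact b * qFact c * (gp (b + c) b * gp (a + b + c) a)
        = qFact a * (qFact b * qFact c * gp (b+c) b) * gp (a+b+c) a := by ring
      _ = qFact a * qFact (b+c) * gp (a+b+c) a := by rw [e1]
      _ = qFact (a+b+c) := e2
  exact mul_left_cancel₀
    (by exact mul_ne_zero (mul_ne_zero (qFact_ne_zero a) (qFact_ne_zero b)) (qFact_ne_zero c))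
    (h1.trans h2.symm)
section Part2
open Polynomial

variable {k : Type*} [Field k]

noncomputable def evq (q : k) : Polynomial ℤ →+* k :=
  Polynomial.eval₂RingHom (Int.castRingHom k) q

noncomputable def gk (q : k) (n m : ℕ) : k := evq q (gp n m)

noncomputable def fkk (q : k) (n : ℕ) : k := evq q (qFact n)

lemma qBinom_eq_gk (q : k) {n m : ℕ} (h : m ≤ n) : qBinom k q n m = gk q n m := by
  unfold qBinom gk evq
  rw [gaussPoly_eq_gp h]
  rfl

lemma gk_zero_right (q : k) (n : ℕ) : gk q n 0 = 1 := by
  rw [gk, gp_zero_right, map_one]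

lemma gk_diag (q : k) (n : ℕ) : gk q n n = 1 := by
  rw [gk, gp_diag, map_one]

lemma gk_eq_zero (q : k) {n m : ℕ} (h : n < m) : gk q n m = 0 := by
  rw [gk, gp_eq_zero h, map_zero]

lemma fkk_fact (q : k) {n m : ℕ} (h : m ≤ n) :
    fkk q m * fkk q (n - m) * gk q n m = fkk q n := by
  unfold fkk gk
  rw [← map_mul, ← map_mul, gp_fact n m h]

lemma gk_symm (q : k) {n m : ℕ} (h : m ≤ n) : gk q n m = gk q n (n - m) := by
  unfold gk; rw [gp_symm h]

lemma gk_assoc (q : k) (a b c : ℕ) :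
    gk q (a + b) a * gk q (a + b + c) (a + b) = gk q (b + c) b * gk q (a + b + c) a := by
  unfold gk; rw [← map_mul, ← map_mul, gp_assoc]

lemma gk_succ_succ (q : k) (n m : ℕ) :
    gk q (n+1) (m+1) = gk q n (m+1) + q^(n-m) * gk q n m := by
  unfold gk
  show evq q (gp n (m+1) + X^(n-m) * gp n m) = _
  rw [map_add, map_mul]
  congr 1
  congr 1
  show Polynomial.eval₂ (Int.castRingHom k) q (X^(n-m)) = q^(n-m)
  simp

noncomputable def PP (q : k) (n : ℕ) : Polynomial k :=
  ∏ i ∈ Finset.range n, (Polynomial.C (q ^ i) * Polynomial.X + 1)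

lemma PP_coeff (q : k) : ∀ n m : ℕ, (PP q n).coeff m = q^(m.choose 2) * gk q n m := by
  intro n
  induction n with
  | zero =>
    intro m
    show (1 : Polynomial k).coeff m = _
    match m with
    | 0 => simp [gk_zero_right]
    | m+1 =>
      rw [coeff_one]
      have : gk q 0 (m+1) = 0 := gk_eq_zero q (by omega)
      simp [this]
  | succ n ih =>
    intro m
    have hP : PP q (n+1) = PP q n * Polynomial.C (q^n) * X + PP q n := by
      rw [PP, Finset.prod_range_succ, mul_add, mul_one, ← mul_assoc]; rfl
    match m with
    | 0 =>
      rw [hP, coeff_add, mul_coeff_zero, coeff_X_zero, mul_zero, zero_add, ih]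
      simp [gk_zero_right]
    | m+1 =>
      rw [hP, coeff_add, coeff_mul_X, coeff_mul_C, ih, ih, gk_succ_succ]
      rcases le_or_gt m n with h | h
      · have h2 : (m+1).choose 2 = m.choose 1 + m.choose 2 := Nat.choose_succ_succ m 1
        have hc : m.choose 2 + n = (m+1).choose 2 + (n - m) := by
          rw [h2, Nat.choose_one_right]; omega
        have hq : q ^ m.choose 2 * q ^ n = q ^ (m+1).choose 2 * q ^ (n - m) := by
          rw [← pow_add, ← pow_add, hc]
        linear_combination gk q n m * hq
      · rw [gk_eq_zero q h, gk_eq_zero q (by omega : n < m + 1)]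
        ring
end Part2
section Part3
open Polynomial

variable {k : Type*} [Field k] {q : k} {w : ℕ}

noncomputable def qint (q : k) (n : ℕ) : k := evq q (qPoly n)

lemma qint_eq (q : k) (n : ℕ) : qint q n = ∑ i ∈ Finset.range n, q ^ i := by
  unfold qint qPoly evq
  rw [coe_eval₂RingHom, eval₂_finset_sum]
  simp

lemma qint_ne_zero (hw : orderOf q = w) {i : ℕ} (h0 : 0 < i) (hiw : i < w) :
    qint q i ≠ 0 := by
  have hpow : q ^ i ≠ 1 := by
    intro h
    have : orderOf q ∣ i := orderOf_dvd_iff_pow_eq_one.mpr h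
    rw [hw] at this
    exact absurd (Nat.le_of_dvd h0 this) (by omega)
  intro h
  have hgs := geom_sum_mul q i
  rw [← qint_eq, h, zero_mul] at hgs
  exact hpow (sub_eq_zero.mp hgs.symm)

lemma fkk_eq_prod (q : k) (n : ℕ) : fkk q n = ∏ i ∈ Finset.range n, qint q (i + 1) := by
  unfold fkk qFact qint
  rw [map_prod]

lemma fkk_ne_zero (hw : orderOf q = w) {n : ℕ} (h : n < w) : fkk q n ≠ 0 := by
  rw [fkk_eq_prod]
  exact Finset.prod_ne_zero_iff.mpr fun i hi =>
    qint_ne_zero hw (by omega) (by have := Finset.mem_range.mp hi; omega)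

lemma qint_w_eq_zero (hw : orderOf q = w) (hw1 : 1 < w) : qint q w = 0 := by
  have hq1 : q ≠ 1 := fun h => by rw [h, orderOf_one] at hw; omega
  have hpow : q ^ w = 1 := by rw [← hw]; exact pow_orderOf_eq_one q
  have hgs := geom_sum_mul q w
  rw [← qint_eq, hpow, sub_self] at hgs
  rcases mul_eq_zero.mp hgs with h | h
  · exact h
  · exact (hq1 (sub_eq_zero.mp h)).elim

lemma fkk_w_eq_zero (hw : orderOf q = w) (hw1 : 1 < w) : fkk q w = 0 := by
  rw [fkk_eq_prod]
  refine Finset.prod_eq_zero (Finset.mem_range.mpr (show w - 1 < w by omega)) ?_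
  have : w - 1 + 1 = w := by omega
  rw [this, qint_w_eq_zero hw hw1]

lemma gk_w_mid (hw : orderOf q = w) {j : ℕ} (h0 : 0 < j) (hjw : j < w) :
    gk q w j = 0 := by
  have hfact := fkk_fact q (le_of_lt hjw)
  rw [fkk_w_eq_zero hw (by omega)] at hfact
  rcases mul_eq_zero.mp hfact with h | h
  · rcases mul_eq_zero.mp h with h' | h'
    · exact absurd h' (fkk_ne_zero hw hjw)
    · exact absurd h' (fkk_ne_zero hw (by omega))
  · exact h

lemma PP_w (hw : orderOf q = w) (hw0 : 0 < w) :
    PP q w = 1 + C (q ^ (w.choose 2)) * X ^ w := by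
  ext m
  rw [PP_coeff, coeff_add, coeff_one, coeff_C_mul, coeff_X_pow]
  by_cases h0 : m = 0
  · subst h0
    rw [if_pos rfl, if_neg (by omega), gk_zero_right]
    simp
  · rw [if_neg h0]
    by_cases hmw : m = w
    · subst hmw
      rw [if_pos rfl, gk_diag]
      simp
    · rw [if_neg hmw]
      rcases lt_or_gt_of_ne hmw with h | h
      · rw [gk_w_mid hw (by omega) h]
        simp
      · rw [gk_eq_zero q h]
        simp

lemma PP_zero (q : k) : PP q 0 = 1 := by
  rw [PP, Finset.range_zero, Finset.prod_empty]

lemma PP_mul_w (hw : orderOf q = w) : ∀ a, PP q (a + w) = PP q a * PP q w := by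
  intro a
  induction a with
  | zero => rw [zero_add, PP_zero, one_mul]
  | succ a ih =>
    have h1 : a + 1 + w = (a + w) + 1 := by omega
    have hq : q ^ (a + w) = q ^ a := by
      rw [pow_add, ← hw, pow_orderOf_eq_one, mul_one]
    have h2 : PP q (a + 1) = PP q a * (C (q ^ a) * X + 1) := by
      rw [PP, Finset.prod_range_succ, ← PP]
    have h3 : PP q (a + w + 1) = PP q (a + w) * (C (q ^ (a + w)) * X + 1) := by
      rw [PP, Finset.prod_range_succ, ← PP]
    rw [h1, h3, ih, hq, h2]
    ring

lemma PP_decomp (hw : orderOf q = w) (c d : ℕ) :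
    PP q (c * w + d) = (PP q w) ^ c * PP q d := by
  induction c with
  | zero => rw [zero_mul, zero_add, pow_zero, one_mul]
  | succ c ih =>
    have h1 : (c + 1) * w + d = (c * w + d) + w := by ring
    rw [h1, PP_mul_w hw, ih, pow_succ]
    ring

lemma coeff_one_add_C_mul_X_pow (hw0 : 0 < w) (u : k) (c m : ℕ) :
    ((1 + C u * X ^ w) ^ c).coeff m
      = if m % w = 0 then (c.choose (m / w) : k) * u ^ (m / w) else 0 := by
  rw [add_comm (1 : Polynomial k), add_pow]
  have hterm : ∀ j : ℕ, (C u * X ^ w) ^ j * 1 ^ (c - j) * (c.choose j : Polynomial k)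
      = C (u ^ j * (c.choose j : k)) * X ^ (w * j) := by
    intro j
    rw [one_pow, mul_one, mul_pow, ← C_pow, ← pow_mul, ← C_eq_natCast, C_mul]
    ring
  rw [Finset.sum_congr rfl fun j _ => hterm j, finset_sum_coeff]
  have hterm2 : ∀ j : ℕ, (C (u ^ j * (c.choose j : k)) * X ^ (w * j)).coeff m
      = (u ^ j * (c.choose j : k)) * (if m = w * j then 1 else 0) := by
    intro j
    rw [coeff_C_mul, coeff_X_pow]
  rw [Finset.sum_congr rfl fun j _ => hterm2 j]
  by_cases hmod : m % w = 0
  · by_cases hle : m / w ≤ c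
    · rw [Finset.sum_eq_single (m / w)]
      · rw [if_pos (Nat.mul_div_cancel' (Nat.dvd_of_mod_eq_zero hmod)).symm, if_pos hmod, mul_one, mul_comm]
      · intro j _ hj
        rw [if_neg (by intro h; subst h; exact hj (Nat.mul_div_cancel_left j hw0).symm),
          mul_zero]
      · intro h
        exact absurd (Finset.mem_range.mpr (by omega)) h
    · rw [if_pos hmod, Finset.sum_eq_zero, Nat.choose_eq_zero_of_lt (by omega)]
      · simp
      · intro j hj
        have hjc := Finset.mem_range.mp hj
        rw [if_neg (by intro hx; rw [hx, Nat.mul_div_cancel_left j hw0] at hle; omega),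
          mul_zero]
  · rw [if_neg hmod, Finset.sum_eq_zero]
    intro j _
    rw [if_neg (by intro hx; rw [hx, Nat.mul_mod_right] at hmod; exact hmod rfl), mul_zero]

lemma coeff_mul_PP (hw : orderOf q = w) (hw0 : 0 < w) {d : ℕ} (hd : d < w) (c m : ℕ) :
    (((1 + C (q ^ (w.choose 2)) * X ^ w) ^ c) * PP q d).coeff m
      = (c.choose (m / w) : k) * (q ^ (w.choose 2)) ^ (m / w) * (PP q d).coeff (m % w) := by
  rw [coeff_mul]
  rw [Finset.sum_eq_single ((w * (m / w), m % w) : ℕ × ℕ)]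
  · rw [coeff_one_add_C_mul_X_pow hw0, if_pos (Nat.mul_mod_right w _),
      Nat.mul_div_cancel_left _ hw0]
  · intro b hb hne
    have hbm := Finset.HasAntidiagonal.mem_antidiagonal.mp hb
    by_cases h1 : b.1 % w = 0
    · by_cases h2 : b.2 < w
      · exfalso
        obtain ⟨t, ht⟩ := Nat.dvd_of_mod_eq_zero h1
        have hm2 : m % w = b.2 := by
          rw [← hbm, ht, Nat.mul_add_mod, Nat.mod_eq_of_lt h2]
        have hm1 : m / w = t := by
          rw [← hbm, ht, Nat.mul_add_div hw0, Nat.div_eq_of_lt h2, add_zero]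
        exact hne (Prod.ext_iff.mpr ⟨by rw [ht, hm1], by omega⟩)
      · rw [PP_coeff, gk_eq_zero q (by omega), mul_zero, mul_zero]
    · rw [coeff_one_add_C_mul_X_pow hw0, if_neg h1, zero_mul]
  · intro h
    exact absurd (Finset.HasAntidiagonal.mem_antidiagonal.mpr (Nat.div_add_mod m w)) h

lemma qLucas (hw : orderOf q = w) (hw0 : 0 < w) {d : ℕ} (hd : d < w) (c m : ℕ) :
    q ^ (m.choose 2) * gk q (c * w + d) m
      = (c.choose (m / w) : k) * (q ^ (w.choose 2)) ^ (m / w)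
        * (q ^ ((m % w).choose 2) * gk q d (m % w)) := by
  rw [← PP_coeff, ← PP_coeff, PP_decomp hw, PP_w hw hw0, coeff_mul_PP hw hw0 hd]

lemma gk_zero_iff (hq : q ≠ 0) (hw : orderOf q = w) (hw0 : 0 < w) {d : ℕ} (hd : d < w)
    (c m : ℕ) :
    gk q (c * w + d) m = 0 ↔ ((c.choose (m / w) : k) = 0 ∨ gk q d (m % w) = 0) := by
  have h := qLucas hw hw0 hd c m
  constructor
  · intro h0
    rw [h0, mul_zero] at h
    rcases mul_eq_zero.mp h.symm with h' | h'
    · rcases mul_eq_zero.mp h' with h'' | h''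
      · exact Or.inl h''
      · exact absurd h'' (pow_ne_zero _ (pow_ne_zero _ hq))
    · rcases mul_eq_zero.mp h' with h'' | h''
      · exact absurd h'' (pow_ne_zero _ hq)
      · exact Or.inr h''
  · intro h0
    have hrhs : (c.choose (m / w) : k) * (q ^ (w.choose 2)) ^ (m / w)
        * (q ^ ((m % w).choose 2) * gk q d (m % w)) = 0 := by
      rcases h0 with h' | h'
      · rw [h', zero_mul, zero_mul]
      · rw [h', mul_zero, mul_zero]
    rw [hrhs] at h
    rcases mul_eq_zero.mp h with h' | h'
    · exact absurd h' (pow_ne_zero _ hq)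
    · exact h'
end Part3
section Part4
variable {k : Type*} [Field k] {ℓ : ℕ} [CharP k ℓ]

lemma cast_mod_char (a : ℕ) : ((a : ℕ) : k) = ((a % ℓ : ℕ) : k) := by
  conv_lhs => rw [← Nat.div_add_mod a ℓ]
  push_cast
  rw [CharP.cast_eq_zero k ℓ, zero_mul, zero_add]

lemma cast_eq_of_modeq {a b : ℕ} (h : a ≡ b [MOD ℓ]) : (a : k) = (b : k) := by
  have h' : a % ℓ = b % ℓ := h
  rw [cast_mod_char (ℓ := ℓ) a, cast_mod_char (ℓ := ℓ) b, h']

lemma lucas_step (hp : ℓ.Prime) (n m : ℕ) :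
    ((n.choose m : ℕ) : k) = ((n % ℓ).choose (m % ℓ) : k) * ((n / ℓ).choose (m / ℓ) : k) := by
  haveI : Fact ℓ.Prime := ⟨hp⟩
  have h := Choose.choose_modEq_choose_mod_mul_choose_div_nat (p := ℓ) (n := n) (k := m)
  have := cast_eq_of_modeq (k := k) (ℓ := ℓ) h
  rw [this, Nat.cast_mul]

lemma L1k (hp : ℓ.Prime) (u v : ℕ) : ∀ r : ℕ,
    (((u * ℓ ^ r).choose (v * ℓ ^ r) : ℕ) : k) = ((u.choose v : ℕ) : k) := by
  intro r
  induction r with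
  | zero => rw [pow_zero, mul_one, mul_one]
  | succ r ih =>
    have e1 : u * ℓ ^ (r + 1) = (u * ℓ ^ r) * ℓ := by ring
    have e2 : v * ℓ ^ (r + 1) = (v * ℓ ^ r) * ℓ := by ring
    rw [lucas_step hp, e1, e2, Nat.mul_mod_left, Nat.mul_mod_left,
      Nat.mul_div_cancel _ hp.pos, Nat.mul_div_cancel _ hp.pos, Nat.choose_self,
      Nat.cast_one, one_mul, ih]

lemma L2k (hp : ℓ.Prime) (c t : ℕ) (hc : c < ℓ) : ∀ r : ℕ,
    (((c * ℓ ^ r + ℓ ^ (r + 1) * t).choose (c * ℓ ^ r) : ℕ) : k) = 1 := by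
  intro r
  induction r with
  | zero =>
    rw [pow_zero, mul_one, pow_one, lucas_step hp, Nat.add_mul_mod_self_left,
      Nat.mod_eq_of_lt hc, Nat.add_mul_div_left _ _ hp.pos, Nat.div_eq_of_lt hc]
    simp
  | succ r ih =>
    have e1 : c * ℓ ^ (r + 1) + ℓ ^ (r + 2) * t = (c * ℓ ^ r + ℓ ^ (r + 1) * t) * ℓ := by ring
    have e2 : c * ℓ ^ (r + 1) = (c * ℓ ^ r) * ℓ := by ring
    rw [lucas_step hp, e1, e2, Nat.mul_mod_left, Nat.mul_mod_left,
      Nat.mul_div_cancel _ hp.pos, Nat.mul_div_cancel _ hp.pos, Nat.choose_self,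
      Nat.cast_one, one_mul, ih]

lemma choose_pow_zero_k (hp : ℓ.Prime) (r : ℕ) :
    (((ℓ ^ (r + 1)).choose ((ℓ - 1) * ℓ ^ r) : ℕ) : k) = 0 := by
  have e1 : ℓ ^ (r + 1) = ℓ * ℓ ^ r := by ring
  rw [e1, L1k hp ℓ (ℓ - 1) r]
  have e2 : ℓ.choose (ℓ - 1) = ℓ := by
    have h1 : ℓ - (ℓ - 1) = 1 := by have := hp.pos; omega
    rw [← Nat.choose_symm (by omega), h1, Nat.choose_one_right]
  rw [e2, CharP.cast_eq_zero]
end Part4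
section Part5
variable {k : Type*} [Field k] {q : k}

lemma qBinom_diag (q : k) (n : ℕ) : qBinom k q n n = 1 := by
  rw [qBinom_eq_gk q le_rfl, gk_diag]

lemma qBinom_zero_right (q : k) (n : ℕ) : qBinom k q n 0 = 1 := by
  rw [qBinom_eq_gk q (Nat.zero_le n), gk_zero_right]

lemma qBinom_comm (q : k) (a b : ℕ) : qBinom k q (a + b) a = qBinom k q (a + b) b := by
  rw [qBinom_eq_gk q (by omega), qBinom_eq_gk q (by omega), gk_symm q (show a ≤ a + b by omega)]
  congr 1
  omega

lemma qBinom_assoc (q : k) (a b c : ℕ) :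
    qBinom k q (a + b) a * qBinom k q (a + b + c) (a + b)
      = qBinom k q (b + c) b * qBinom k q (a + b + c) a := by
  rw [qBinom_eq_gk q (by omega), qBinom_eq_gk q (by omega), qBinom_eq_gk q (by omega),
    qBinom_eq_gk q (by omega)]
  exact gk_assoc q a b c

lemma Dmul_eq_sum (q : k) (f g : ℕ →₀ k) :
    Dmul q f g = f.sum fun a ca => g.sum fun b cb =>
      Finsupp.single (a + b) (qBinom k q (a + b) a * cb * ca) := by
  unfold Dmul mulRightL
  rw [Finsupp.lsum_apply]
  refine Finsupp.sum_congr ?_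
  intro a _
  rw [Finsupp.sum, Finsupp.sum, LinearMap.sum_apply]
  refine Finset.sum_congr rfl ?_
  intro b _
  rw [LinearMap.smul_apply, Finsupp.lsingle_apply, Finsupp.smul_single, smul_eq_mul]

lemma Dmul_single (q : k) (a b : ℕ) (c d : k) :
    Dmul q (Finsupp.single a c) (Finsupp.single b d)
      = Finsupp.single (a + b) (qBinom k q (a + b) a * d * c) := by
  rw [Dmul_eq_sum, Finsupp.sum_single_index (by simp), Finsupp.sum_single_index (by simp)]

lemma Dmul_zero_left (q : k) (g : ℕ →₀ k) : Dmul q 0 g = 0 := by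
  rw [Dmul_eq_sum, Finsupp.sum_zero_index]

lemma Dmul_zero_right (q : k) (f : ℕ →₀ k) : Dmul q f 0 = 0 := by
  rw [Dmul_eq_sum]
  simp [Finsupp.sum_zero_index]

lemma Dmul_add_left (q : k) (f f' g : ℕ →₀ k) :
    Dmul q (f + f') g = Dmul q f g + Dmul q f' g := by
  rw [Dmul_eq_sum, Dmul_eq_sum, Dmul_eq_sum]
  exact Finsupp.sum_add_index' (by intro a; simp) (by
    intro a c1 c2
    rw [← Finsupp.sum_add]
    refine Finsupp.sum_congr ?_
    intro b _
    rw [← Finsupp.single_add]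
    congr 1
    ring)

lemma Dmul_add_right (q : k) (f g g' : ℕ →₀ k) :
    Dmul q f (g + g') = Dmul q f g + Dmul q f g' := by
  rw [Dmul_eq_sum, Dmul_eq_sum, Dmul_eq_sum, ← Finsupp.sum_add]
  refine Finsupp.sum_congr ?_
  intro a _
  exact Finsupp.sum_add_index' (by intro b; simp) (by
    intro b c1 c2
    rw [← Finsupp.single_add]
    congr 1
    ring)

lemma Dmul_smul_left (q : k) (c : k) (f g : ℕ →₀ k) :
    Dmul q (c • f) g = c • Dmul q f g := by
  rw [Dmul_eq_sum, Dmul_eq_sum, Finsupp.smul_sum,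
    Finsupp.sum_smul_index' (by intro i; simp)]
  refine Finsupp.sum_congr ?_
  intro a _
  rw [Finsupp.smul_sum]
  refine Finsupp.sum_congr ?_
  intro b _
  rw [Finsupp.smul_single, smul_eq_mul, smul_eq_mul]
  congr 1
  ring

lemma Dmul_smul_right (q : k) (c : k) (f g : ℕ →₀ k) :
    Dmul q f (c • g) = c • Dmul q f g := by
  rw [Dmul_eq_sum, Dmul_eq_sum, Finsupp.smul_sum]
  refine Finsupp.sum_congr ?_
  intro a _
  rw [Finsupp.smul_sum, Finsupp.sum_smul_index' (by intro i; simp)]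
  refine Finsupp.sum_congr ?_
  intro b _
  rw [Finsupp.smul_single, smul_eq_mul, smul_eq_mul]
  congr 1
  ring

lemma Dmul_one (q : k) (f : ℕ →₀ k) : Dmul q f (Finsupp.single 0 1) = f := by
  rw [Dmul_eq_sum]
  have h : ∀ a : ℕ, ∀ ca : k,
      ((Finsupp.single 0 1 : ℕ →₀ k).sum fun b cb =>
        Finsupp.single (a + b) (qBinom k q (a + b) a * cb * ca)) = Finsupp.single a ca := by
    intro a ca
    rw [Finsupp.sum_single_index (by simp)]
    simp only [add_zero, qBinom_diag, one_mul, mul_one]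
  rw [Finsupp.sum_congr fun a _ => h a (f a)]
  exact Finsupp.sum_single f

lemma one_Dmul (q : k) (f : ℕ →₀ k) : Dmul q (Finsupp.single 0 1) f = f := by
  rw [Dmul_eq_sum, Finsupp.sum_single_index (by simp)]
  have h : ∀ b : ℕ, ∀ cb : k,
      Finsupp.single (0 + b) (qBinom k q (0 + b) 0 * cb * 1) = Finsupp.single b cb := by
    intro b cb
    simp only [zero_add, qBinom_zero_right, one_mul, mul_one]
  rw [Finsupp.sum_congr fun b _ => h b (f b)]
  exact Finsupp.sum_single f

lemma Dmul_comm (q : k) (f g : ℕ →₀ k) : Dmul q f g = Dmul q g f := by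
  induction f using Finsupp.induction_linear with
  | zero => rw [Dmul_zero_left, Dmul_zero_right]
  | add f f' hf hf' => rw [Dmul_add_left, Dmul_add_right, hf, hf']
  | single a c =>
    induction g using Finsupp.induction_linear with
    | zero => rw [Dmul_zero_left, Dmul_zero_right]
    | add g g' hg hg' => rw [Dmul_add_left, Dmul_add_right, hg, hg']
    | single b d =>
      rw [Dmul_single, Dmul_single, add_comm b a, qBinom_comm q a b]
      congr 1
      ring

lemma Dmul_assoc (q : k) (f g h : ℕ →₀ k) :
    Dmul q (Dmul q f g) h = Dmul q f (Dmul q g h) := by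
  induction f using Finsupp.induction_linear with
  | zero => simp [Dmul_zero_left, Dmul_zero_right]
  | add f f' hf hf' => rw [Dmul_add_left, Dmul_add_left, Dmul_add_left, hf, hf']
  | single a c =>
    induction g using Finsupp.induction_linear with
    | zero => simp [Dmul_zero_left, Dmul_zero_right]
    | add g g' hg hg' =>
      rw [Dmul_add_right, Dmul_add_left, Dmul_add_left, Dmul_add_right, hg, hg']
    | single b d =>
      induction h using Finsupp.induction_linear with
      | zero => simp [Dmul_zero_left, Dmul_zero_right]
      | add h h' hh hh' => rw [Dmul_add_right, Dmul_add_right, Dmul_add_right, hh, hh']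
      | single e r =>
        rw [Dmul_single, Dmul_single, Dmul_single, Dmul_single, ← add_assoc]
        congr 1
        linear_combination r * d * c * (qBinom_assoc q a b e)

lemma Dmul_mul_mul (q : k) (a b c d : ℕ →₀ k) :
    Dmul q (Dmul q a b) (Dmul q c d) = Dmul q (Dmul q a c) (Dmul q b d) := by
  rw [Dmul_assoc, ← Dmul_assoc q b c d, Dmul_comm q b c, Dmul_assoc q c b d, ← Dmul_assoc]

lemma Dpow_single (q : k) (B : ℕ) : ∀ n : ℕ, ∃ c : k,
    Dpow q (Finsupp.single B 1) n = Finsupp.single (n * B) c ∧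
    ((∀ j, j < n → qBinom k q ((j + 1) * B) (j * B) ≠ 0) → c ≠ 0) := by
  intro n
  induction n with
  | zero =>
    exact ⟨1, by rw [Dpow, zero_mul], fun _ => one_ne_zero⟩
  | succ n ih =>
    obtain ⟨c, hc, hne⟩ := ih
    refine ⟨qBinom k q (n * B + B) (n * B) * 1 * c, ?_, ?_⟩
    · rw [Dpow, hc, Dmul_single]
      congr 1
      ring
    · intro hyp
      have h1 : qBinom k q (n * B + B) (n * B) ≠ 0 := by
        have := hyp n (by omega)
        rwa [show (n + 1) * B = n * B + B by ring] at this
      have h2 : c ≠ 0 := hne fun j hj => hyp j (by omega)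
      rw [mul_one]
      exact mul_ne_zero h1 h2

lemma Dpow_single_eq_zero (q : k) (B e : ℕ) (he : 0 < e)
    (h : qBinom k q (e * B) ((e - 1) * B) = 0) :
    Dpow q (Finsupp.single B 1) e = 0 := by
  obtain ⟨e', rfl⟩ : ∃ e', e = e' + 1 := ⟨e - 1, by omega⟩
  simp only [Nat.add_sub_cancel] at h
  obtain ⟨c, hc, _⟩ := Dpow_single q B e'
  rw [Dpow, hc, Dmul_single]
  have h2 : qBinom k q (e' * B + B) (e' * B) * 1 * c = 0 := by
    rw [show e' * B + B = (e' + 1) * B by ring, h]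
    ring
  rw [h2, Finsupp.single_zero]

lemma Dpow_add (q : k) (f : ℕ →₀ k) (a b : ℕ) :
    Dpow q f (a + b) = Dmul q (Dpow q f a) (Dpow q f b) := by
  induction b with
  | zero => rw [add_zero, Dpow, Dmul_one]
  | succ b ih =>
    rw [show a + (b + 1) = (a + b) + 1 by omega, Dpow, Dpow, ih, Dmul_assoc]
end Part5
section Part6
variable {w ℓ : ℕ}

lemma bSeq_zero : bSeq w ℓ 0 = 1 := by simp [bSeq]

lemma bSeq_succ (hw0 : 0 < w) (i : ℕ) : bSeq w ℓ (i + 1) = bSeq w ℓ 1 * ℓ ^ i := by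
  rcases Nat.lt_or_ge 1 w with h | h
  · have h1 : bSeq w ℓ (i + 1) = w * ℓ ^ i := by simp [bSeq, h]
    have h2 : bSeq w ℓ 1 = w := by simp [bSeq, h]
    rw [h1, h2]
  · have hw1 : w = 1 := by omega
    have h1 : bSeq w ℓ (i + 1) = ℓ ^ (i + 1) := by simp [bSeq, hw1]
    have h2 : bSeq w ℓ 1 = ℓ := by simp [bSeq, hw1]
    rw [h1, h2, pow_succ']

lemma bSeq_one_gt (hw0 : 0 < w) (hl : 1 < ℓ) : 1 < bSeq w ℓ 1 := by
  rcases Nat.lt_or_ge 1 w with h | h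
  · have h2 : bSeq w ℓ 1 = w := by simp [bSeq, h]
    omega
  · have hw1 : w = 1 := by omega
    have h2 : bSeq w ℓ 1 = ℓ := by simp [bSeq, hw1]
    omega

lemma bSeq_pos (hw0 : 0 < w) (hl : 1 < ℓ) : ∀ i, 0 < bSeq w ℓ i := by
  intro i
  cases i with
  | zero => rw [bSeq_zero]; omega
  | succ i =>
    rw [bSeq_succ hw0]
    have := bSeq_one_gt (w := w) (ℓ := ℓ) hw0 hl
    positivity

lemma bSeq_e_zero : bSeq w ℓ 1 / bSeq w ℓ 0 = bSeq w ℓ 1 := by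
  rw [bSeq_zero, Nat.div_one]

lemma bSeq_e_succ (hw0 : 0 < w) (hl : 1 < ℓ) (i : ℕ) :
    bSeq w ℓ (i + 2) / bSeq w ℓ (i + 1) = ℓ := by
  rw [bSeq_succ hw0 (i + 1), bSeq_succ hw0 i, pow_succ, ← mul_assoc]
  exact Nat.mul_div_cancel_left ℓ (by
    have := bSeq_one_gt (w := w) (ℓ := ℓ) hw0 hl
    positivity)

lemma bSeq_mul_e (hw0 : 0 < w) (hl : 1 < ℓ) (i : ℕ) :
    bSeq w ℓ i * (bSeq w ℓ (i + 1) / bSeq w ℓ i) = bSeq w ℓ (i + 1) := by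
  cases i with
  | zero =>
    rw [bSeq_zero]
    show 1 * (bSeq w ℓ 1 / 1) = bSeq w ℓ 1
    rw [Nat.div_one, one_mul]
  | succ i =>
    rw [bSeq_e_succ hw0 hl, bSeq_succ hw0 i, bSeq_succ hw0 (i + 1), pow_succ]
    ring

def valB (w ℓ : ℕ) (m : ℕ →₀ ℕ) : ℕ := m.sum fun i a => a * bSeq w ℓ i

def RedB (w ℓ : ℕ) (m : ℕ →₀ ℕ) : Prop :=
  ∀ i, m i < bSeq w ℓ (i + 1) / bSeq w ℓ i

lemma valB_single (i a : ℕ) : valB w ℓ (Finsupp.single i a) = a * bSeq w ℓ i := by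
  unfold valB
  rw [Finsupp.sum_single_index]
  exact zero_mul _

lemma valB_add (m m' : ℕ →₀ ℕ) : valB w ℓ (m + m') = valB w ℓ m + valB w ℓ m' := by
  unfold valB
  exact Finsupp.sum_add_index' (fun a => zero_mul _) (fun a b c => add_mul b c _)

lemma valB_eq_sum_range (m : ℕ →₀ ℕ) {N : ℕ} (h : ∀ i ∈ m.support, i < N) :
    valB w ℓ m = ∑ i ∈ Finset.range N, m i * bSeq w ℓ i := by
  unfold valB
  rw [Finsupp.sum_of_support_subset m (fun i hi => Finset.mem_range.mpr (h i hi))]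
  intro i _
  exact zero_mul _

lemma peel (A B g0 h0 c : ℕ) (hc : 0 < c) (hg : g0 < c) (hh : h0 < c)
    (heq : g0 + A * c = h0 + B * c) : g0 = h0 ∧ A = B := by
  have h1 : (g0 + A * c) % c = g0 := by rw [Nat.add_mul_mod_self_right, Nat.mod_eq_of_lt hg]
  have h2 : (h0 + B * c) % c = h0 := by rw [Nat.add_mul_mod_self_right, Nat.mod_eq_of_lt hh]
  have h3 : (g0 + A * c) / c = A := by
    rw [Nat.add_mul_div_right _ _ hc, Nat.div_eq_of_lt hg, zero_add]
  have h4 : (h0 + B * c) / c = B := by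
    rw [Nat.add_mul_div_right _ _ hc, Nat.div_eq_of_lt hh, zero_add]
  constructor
  · rw [← h1, ← h2, heq]
  · rw [← h3, ← h4, heq]

lemma bval_inj (hl : 1 < ℓ) : ∀ N : ℕ, ∀ g h : ℕ → ℕ, (∀ i, g i < ℓ) → (∀ i, h i < ℓ) →
    (∑ i ∈ Finset.range N, g i * ℓ ^ i) = (∑ i ∈ Finset.range N, h i * ℓ ^ i) →
    ∀ i < N, g i = h i := by
  intro N
  induction N with
  | zero => intro g h _ _ _ i hi; omega
  | succ N ih =>
    intro g h hg hh heq i hi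
    have hG : ∑ i ∈ Finset.range (N + 1), g i * ℓ ^ i
        = g 0 + (∑ i ∈ Finset.range N, g (i + 1) * ℓ ^ i) * ℓ := by
      rw [Finset.sum_range_succ' (fun i => g i * ℓ ^ i) N, Finset.sum_mul, pow_zero,
        mul_one, add_comm]
      congr 1
      exact Finset.sum_congr rfl fun j _ => by rw [pow_succ]; ring
    have hH : ∑ i ∈ Finset.range (N + 1), h i * ℓ ^ i
        = h 0 + (∑ i ∈ Finset.range N, h (i + 1) * ℓ ^ i) * ℓ := by
      rw [Finset.sum_range_succ' (fun i => h i * ℓ ^ i) N, Finset.sum_mul, pow_zero,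
        mul_one, add_comm]
      congr 1
      exact Finset.sum_congr rfl fun j _ => by rw [pow_succ]; ring
    rw [hG, hH] at heq
    obtain ⟨h0eq, hrest⟩ := peel _ _ _ _ ℓ (by omega) (hg 0) (hh 0) heq
    match i, hi with
    | 0, _ => exact h0eq
    | j + 1, hj =>
      exact ih (fun i => g (i + 1)) (fun i => h (i + 1)) (fun i => hg _) (fun i => hh _)
        hrest j (by omega)

lemma valB_split (hw0 : 0 < w) (m : ℕ →₀ ℕ) (N : ℕ) (h : ∀ i ∈ m.support, i < N + 1) :
    valB w ℓ m = m 0 + (∑ i ∈ Finset.range N, m (i + 1) * ℓ ^ i) * bSeq w ℓ 1 := by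
  rw [valB_eq_sum_range m h, Finset.sum_range_succ' (fun i => m i * bSeq w ℓ i) N,
    Finset.sum_mul, bSeq_zero, mul_one, add_comm]
  congr 1
  refine Finset.sum_congr rfl fun j _ => by rw [bSeq_succ hw0]; ring

lemma valB_inj (hw0 : 0 < w) (hl : 1 < ℓ) (m m' : ℕ →₀ ℕ) (hm : RedB w ℓ m)
    (hm' : RedB w ℓ m') (h : valB w ℓ m = valB w ℓ m') : m = m' := by
  set N := m.support.sup id + m'.support.sup id + 1 with hN
  have hbm : ∀ i ∈ m.support, i < N + 1 := by
    intro i hi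
    have : id i ≤ m.support.sup id := Finset.le_sup hi
    simp at this; omega
  have hbm' : ∀ i ∈ m'.support, i < N + 1 := by
    intro i hi
    have : id i ≤ m'.support.sup id := Finset.le_sup hi
    simp at this; omega
  rw [valB_split hw0 m N hbm, valB_split hw0 m' N hbm'] at h
  have hW : 1 < bSeq w ℓ 1 := bSeq_one_gt hw0 hl
  have hm0 : m 0 < bSeq w ℓ 1 := by have := hm 0; rwa [bSeq_e_zero] at this
  have hm0' : m' 0 < bSeq w ℓ 1 := by have := hm' 0; rwa [bSeq_e_zero] at this
  obtain ⟨h0, hrest⟩ := peel _ _ _ _ (bSeq w ℓ 1) (by omega) hm0 hm0' h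
  have hdig : ∀ i < N, m (i + 1) = m' (i + 1) := by
    refine bval_inj hl N (fun i => m (i + 1)) (fun i => m' (i + 1)) ?_ ?_ hrest
    · intro i; have := hm (i + 1); rwa [bSeq_e_succ hw0 hl] at this
    · intro i; have := hm' (i + 1); rwa [bSeq_e_succ hw0 hl] at this
  ext i
  match i with
  | 0 => exact h0
  | j + 1 =>
    by_cases hj : j < N
    · exact hdig j hj
    · have h1 : m (j + 1) = 0 := by
        by_contra hne
        have := hbm (j + 1) (Finsupp.mem_support_iff.mpr hne)
        omega
      have h2 : m' (j + 1) = 0 := by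
        by_contra hne
        have := hbm' (j + 1) (Finsupp.mem_support_iff.mpr hne)
        omega
      rw [h1, h2]

lemma exists_base_l (hl : 1 < ℓ) : ∀ t : ℕ, ∃ g : ℕ →₀ ℕ,
    (∀ i, g i < ℓ) ∧ (g.sum fun i a => a * ℓ ^ i) = t := by
  intro t
  induction t using Nat.strong_induction_on with
  | _ t ih =>
    by_cases ht : t = 0
    · exact ⟨0, fun i => by simp; omega, by simp [ht]⟩
    · obtain ⟨g', hg', hv'⟩ := ih (t / ℓ) (Nat.div_lt_self (by omega) hl)
      refine ⟨Finsupp.single 0 (t % ℓ) + Finsupp.mapDomain Nat.succ g', ?_, ?_⟩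
      · intro i
        match i with
        | 0 =>
          rw [Finsupp.add_apply, Finsupp.single_apply, if_pos rfl,
            Finsupp.mapDomain_notin_range _ _ (by simp)]
          have := Nat.mod_lt t (show 0 < ℓ by omega)
          omega
        | i + 1 =>
          rw [Finsupp.add_apply, Finsupp.single_apply, if_neg (by omega),
            Finsupp.mapDomain_apply Nat.succ_injective]
          have := hg' i
          omega
      · rw [Finsupp.sum_add_index' (h := fun i a => a * ℓ ^ i) (fun a => zero_mul _)
            (fun a b c => add_mul b c _),
          Finsupp.sum_single_index (h := fun i a => a * ℓ ^ i) (zero_mul _),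
          Finsupp.sum_mapDomain_index (h := fun i a => a * ℓ ^ i) (fun a => zero_mul _)
            (fun a b c => add_mul b c _)]
        have : (g'.sum fun i a => a * ℓ ^ (Nat.succ i)) = (g'.sum fun i a => a * ℓ ^ i) * ℓ := by
          rw [Finsupp.sum_mul]
          refine Finsupp.sum_congr fun i _ => by rw [pow_succ]; ring
        rw [this, hv']
        rw [pow_zero, mul_one]
        exact Nat.mod_add_div' t ℓ

lemma exists_red (hw0 : 0 < w) (hl : 1 < ℓ) (n : ℕ) :
    ∃ m : ℕ →₀ ℕ, RedB w ℓ m ∧ valB w ℓ m = n := by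
  obtain ⟨g, hg, hv⟩ := exists_base_l hl (n / bSeq w ℓ 1)
  have hW : 1 < bSeq w ℓ 1 := bSeq_one_gt hw0 hl
  refine ⟨Finsupp.single 0 (n % bSeq w ℓ 1) + Finsupp.mapDomain Nat.succ g, ?_, ?_⟩
  · intro i
    match i with
    | 0 =>
      rw [Finsupp.add_apply, Finsupp.single_apply, if_pos rfl,
        Finsupp.mapDomain_notin_range _ _ (by simp),
        bSeq_e_zero]
      have := Nat.mod_lt n (show 0 < bSeq w ℓ 1 by omega)
      omega
    | i + 1 =>
      rw [Finsupp.add_apply, Finsupp.single_apply, if_neg (by omega),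
        Finsupp.mapDomain_apply Nat.succ_injective, bSeq_e_succ hw0 hl]
      have := hg i
      omega
  · rw [valB_add, valB_single, bSeq_zero, mul_one]
    have : valB w ℓ (Finsupp.mapDomain Nat.succ g) = (n / bSeq w ℓ 1) * bSeq w ℓ 1 := by
      unfold valB
      rw [Finsupp.sum_mapDomain_index (h := fun i a => a * bSeq w ℓ i) (fun a => zero_mul _)
        (fun a b c => add_mul b c _)]
      rw [← hv, Finsupp.sum_mul]
      refine Finsupp.sum_congr fun i _ => ?_
      rw [bSeq_succ hw0]
      ring
    rw [this]
    exact Nat.mod_add_div' n (bSeq w ℓ 1)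
end Part6
section Part7
variable {k : Type*} [Field k] {q : k} {w ℓ : ℕ} [CharP k ℓ]

lemma gk_small_ne_zero (hw : orderOf q = w) {n m : ℕ} (hn : n < w) (hm : m ≤ n) :
    gk q n m ≠ 0 := by
  intro h
  have hf := fkk_fact q hm
  rw [h, mul_zero] at hf
  exact fkk_ne_zero hw hn hf.symm

lemma cast_small_ne_zero (hℓ : 1 < ℓ) {n : ℕ} (h0 : 0 < n) (hn : n < ℓ) : (n : k) ≠ 0 := by
  intro h
  have h1 := (CharP.cast_eq_zero_iff k ℓ n).mp h
  have := Nat.le_of_dvd h0 h1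
  omega

lemma gk_ne_zero_of (hq : q ≠ 0) (hw : orderOf q = w) (hw0 : 0 < w) (x y : ℕ)
    (hmod : x % w + y % w < w)
    (hch : (((x / w + y / w).choose (x / w) : ℕ) : k) ≠ 0) :
    qBinom k q (x + y) x ≠ 0 := by
  rw [qBinom_eq_gk q (by omega)]
  have hdecomp : x + y = (x / w + y / w) * w + (x % w + y % w) := by
    calc x + y = (w * (x / w) + x % w) + (w * (y / w) + y % w) := by
          rw [Nat.div_add_mod, Nat.div_add_mod]
      _ = (x / w + y / w) * w + (x % w + y % w) := by ring
  rw [hdecomp, Ne, gk_zero_iff hq hw hw0 hmod]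
  push_neg
  exact ⟨hch, gk_small_ne_zero hw hmod (by omega)⟩

lemma gk_eq_zero_of (hq : q ≠ 0) (hw : orderOf q = w) (hw0 : 0 < w) (n m : ℕ) (hm : m ≤ n)
    (hnm : n % w = 0)
    (hch : (((n / w).choose (m / w) : ℕ) : k) = 0) :
    qBinom k q n m = 0 := by
  rw [qBinom_eq_gk q hm]
  have hdecomp : n = (n / w) * w + 0 := by
    rw [add_zero]
    exact (Nat.div_mul_cancel (Nat.dvd_of_mod_eq_zero hnm)).symm
  rw [hdecomp, gk_zero_iff hq hw hw0 hw0]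
  exact Or.inl hch

lemma bSeq_w_one (hww : w = 1) (i : ℕ) : bSeq w ℓ i = ℓ ^ i := by
  subst hww
  cases i <;> simp [bSeq]

lemma bSeq_w_gt (hw1 : 1 < w) : bSeq w ℓ 1 = w := by
  simp [bSeq, hw1]

-- key nonvanishing 1
lemma keyNZ1 (hq : q ≠ 0) (hw : orderOf q = w) (hw0 : 0 < w) (hp : ℓ.Prime)
    (i j : ℕ) (hj : j + 1 < bSeq w ℓ (i + 1) / bSeq w ℓ i) :
    qBinom k q ((j + 1) * bSeq w ℓ i) (j * bSeq w ℓ i) ≠ 0 := by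
  have hl : 1 < ℓ := hp.one_lt
  rcases Nat.lt_or_ge 1 w with hw1 | hw1
  · -- w > 1
    have hW : bSeq w ℓ 1 = w := bSeq_w_gt hw1
    match i with
    | 0 =>
      rw [bSeq_e_zero, hW] at hj
      have key := gk_ne_zero_of hq hw hw0 j 1 ?_ ?_
      · convert key using 2 <;> rw [bSeq_zero] <;> ring
      · rw [Nat.mod_eq_of_lt (by omega), Nat.mod_eq_of_lt hw1]
        omega
      · rw [Nat.div_eq_of_lt (by omega), Nat.div_eq_of_lt hw1]
        simp
    | r + 1 =>
      rw [bSeq_e_succ hw0 hl] at hj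
      have hb : bSeq w ℓ (r + 1) = w * ℓ ^ r := by rw [bSeq_succ hw0, hW]
      have key := gk_ne_zero_of hq hw hw0 (w * (j * ℓ ^ r)) (w * ℓ ^ r) ?_ ?_
      · convert key using 2 <;> rw [hb] <;> ring
      · rw [Nat.mul_mod_right, Nat.mul_mod_right]
        omega
      · rw [Nat.mul_div_cancel_left _ hw0, Nat.mul_div_cancel_left _ hw0,
          show j * ℓ ^ r + ℓ ^ r = (j + 1) * ℓ ^ r by ring, L1k hp,
          Nat.choose_succ_self_right]
        exact cast_small_ne_zero hl (by omega) (by omega)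
  · -- w = 1
    have hww : w = 1 := by omega
    have hb : ∀ s, bSeq w ℓ s = ℓ ^ s := bSeq_w_one hww
    have hj' : j + 1 < ℓ := by
      rw [hb, hb] at hj
      rwa [pow_succ, Nat.mul_div_cancel_left _ (by positivity : (0:ℕ) < ℓ ^ i)] at hj
    have key := gk_ne_zero_of hq hw hw0 (j * ℓ ^ i) (ℓ ^ i) ?_ ?_
    · convert key using 2 <;> rw [hb] <;> ring
    · rw [hww]; omega
    · rw [hww, Nat.div_one, Nat.div_one,
        show j * ℓ ^ i + ℓ ^ i = (j + 1) * ℓ ^ i by ring, L1k hp,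
        Nat.choose_succ_self_right]
      exact cast_small_ne_zero hl (by omega) (by omega)

-- key nonvanishing 2
lemma keyNZ2 (hq : q ≠ 0) (hw : orderOf q = w) (hw0 : 0 < w) (hp : ℓ.Prime)
    (i a t : ℕ) (ha : a < bSeq w ℓ (i + 1) / bSeq w ℓ i) :
    qBinom k q (a * bSeq w ℓ i + bSeq w ℓ (i + 1) * t) (a * bSeq w ℓ i) ≠ 0 := by
  have hl : 1 < ℓ := hp.one_lt
  rcases Nat.lt_or_ge 1 w with hw1 | hw1
  · -- w > 1
    have hW : bSeq w ℓ 1 = w := bSeq_w_gt hw1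
    match i with
    | 0 =>
      rw [bSeq_e_zero, hW] at ha
      rw [bSeq_zero, hW, mul_one]
      refine gk_ne_zero_of hq hw hw0 a (w * t) ?_ ?_
      · rw [Nat.mod_eq_of_lt ha, Nat.mul_mod_right]
        omega
      · rw [Nat.div_eq_of_lt ha, Nat.mul_div_cancel_left _ hw0]
        simp
    | r + 1 =>
      rw [bSeq_e_succ hw0 hl] at ha
      have hb : bSeq w ℓ (r + 1) = w * ℓ ^ r := by rw [bSeq_succ hw0, hW]
      have hb2 : bSeq w ℓ (r + 2) = w * ℓ ^ (r + 1) := by rw [bSeq_succ hw0, hW]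
      have key := gk_ne_zero_of hq hw hw0 (w * (a * ℓ ^ r)) (w * (ℓ ^ (r + 1) * t)) ?_ ?_
      · convert key using 2
        · rw [hb, hb2]; ring
        · rw [hb]; ring
      · rw [Nat.mul_mod_right, Nat.mul_mod_right]
        omega
      · rw [Nat.mul_div_cancel_left _ hw0, Nat.mul_div_cancel_left _ hw0, L2k hp a t ha r]
        exact one_ne_zero
  · -- w = 1
    have hww : w = 1 := by omega
    have hb : ∀ s, bSeq w ℓ s = ℓ ^ s := bSeq_w_one hww
    have ha' : a < ℓ := by
      rw [hb, hb] at ha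
      rwa [pow_succ, Nat.mul_div_cancel_left _ (by positivity : (0:ℕ) < ℓ ^ i)] at ha
    rw [hb, hb]
    refine gk_ne_zero_of hq hw hw0 (a * ℓ ^ i) (ℓ ^ (i + 1) * t) ?_ ?_
    · rw [hww]; omega
    · rw [hww, Nat.div_one, Nat.div_one, L2k hp a t ha' i]
      exact one_ne_zero

-- key vanishing
lemma keyZ (hq : q ≠ 0) (hw : orderOf q = w) (hw0 : 0 < w) (hp : ℓ.Prime) (i : ℕ) :
    qBinom k q (bSeq w ℓ (i + 1))
      ((bSeq w ℓ (i + 1) / bSeq w ℓ i - 1) * bSeq w ℓ i) = 0 := by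
  have hl : 1 < ℓ := hp.one_lt
  rcases Nat.lt_or_ge 1 w with hw1 | hw1
  · -- w > 1
    have hW : bSeq w ℓ 1 = w := bSeq_w_gt hw1
    match i with
    | 0 =>
      rw [bSeq_e_zero, bSeq_zero, hW, mul_one]
      rw [qBinom_eq_gk q (by omega)]
      exact gk_w_mid hw (by omega) (by omega)
    | r + 1 =>
      rw [bSeq_e_succ hw0 hl]
      have hb : bSeq w ℓ (r + 1) = w * ℓ ^ r := by rw [bSeq_succ hw0, hW]
      have hb2 : bSeq w ℓ (r + 2) = w * ℓ ^ (r + 1) := by rw [bSeq_succ hw0, hW]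
      rw [hb, hb2]
      have he : (ℓ - 1) * (w * ℓ ^ r) = w * ((ℓ - 1) * ℓ ^ r) := by ring
      rw [he]
      refine gk_eq_zero_of hq hw hw0 _ _ ?_ (Nat.mul_mod_right _ _) ?_
      · refine Nat.mul_le_mul_left w ?_
        calc (ℓ - 1) * ℓ ^ r ≤ ℓ * ℓ ^ r := Nat.mul_le_mul_right _ (by omega)
          _ = ℓ ^ (r + 1) := by ring
      · rw [Nat.mul_div_cancel_left _ hw0, Nat.mul_div_cancel_left _ hw0]
        exact choose_pow_zero_k hp r
  · -- w = 1
    have hww : w = 1 := by omega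
    have hb : ∀ s, bSeq w ℓ s = ℓ ^ s := bSeq_w_one hww
    have he : bSeq w ℓ (i + 1) / bSeq w ℓ i = ℓ := by
      rw [hb, hb, pow_succ, Nat.mul_div_cancel_left _ (by positivity : (0:ℕ) < ℓ ^ i)]
    rw [he, hb, hb]
    refine gk_eq_zero_of hq hw hw0 _ _ ?_ (by rw [hww, Nat.mod_one]) ?_
    · calc (ℓ - 1) * ℓ ^ i ≤ ℓ * ℓ ^ i := Nat.mul_le_mul_right _ (by omega)
        _ = ℓ ^ (i + 1) := by ring
    · rw [hww, Nat.div_one, Nat.div_one]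
      exact choose_pow_zero_k hp i
end Part7
section Part8
variable {k : Type*} [Field k] {q : k} {w ℓ : ℕ} [CharP k ℓ]

lemma foldr_const (q : k) (b : ℕ → ℕ) (m : ℕ →₀ ℕ) :
    ∀ (l : List ℕ) (init : ℕ →₀ k), (∀ i ∈ l, m i = 0) →
    l.foldr (fun i acc => Dmul q (Dpow q (Finsupp.single (b i) (1 : k)) (m i)) acc) init
      = init := by
  intro l
  induction l with
  | nil => intro init _; rfl
  | cons i t ih =>
    intro init h
    rw [List.foldr_cons, ih init (fun j hj => h j (List.mem_cons_of_mem i hj)),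
      h i List.mem_cons_self, Dpow, one_Dmul]

lemma Dmon_zero (q : k) (b : ℕ → ℕ) : Dmon q b 0 = Finsupp.single 0 1 := by
  unfold Dmon
  rw [Finsupp.support_zero, Finset.sup_empty, Nat.bot_eq_zero]
  simp only [List.range_succ, List.range_zero, List.nil_append, List.foldr_cons,
    List.foldr_nil]
  show Dmul q (Dpow q (Finsupp.single (b 0) (1 : k)) 0) (Finsupp.single 0 1)
    = Finsupp.single 0 1
  rw [Dpow, one_Dmul]

lemma Dmon_eq_foldr (q : k) (b : ℕ → ℕ) (m : ℕ →₀ ℕ) :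
    ∀ N : ℕ, m.support.sup id < N →
    Dmon q b m = (List.range N).foldr
      (fun i acc => Dmul q (Dpow q (Finsupp.single (b i) (1 : k)) (m i)) acc)
      (Finsupp.single 0 1) := by
  intro N
  induction N with
  | zero => omega
  | succ N ih =>
    intro h
    by_cases hN : m.support.sup id < N
    · rw [ih hN, List.range_succ, List.foldr_append, List.foldr_cons, List.foldr_nil]
      have hmN : m N = 0 := by
        by_contra hne
        have := Finset.le_sup (f := id) (Finsupp.mem_support_iff.mpr hne)
        simp at this
        omega
      rw [hmN, Dpow, one_Dmul]
    · have heq : N = m.support.sup id := by omega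
      subst heq
      rfl

lemma Dmon_add (q : k) (b : ℕ → ℕ) (m m' : ℕ →₀ ℕ) :
    Dmon q b (m + m') = Dmul q (Dmon q b m) (Dmon q b m') := by
  set N := m.support.sup id + m'.support.sup id + 1 with hN
  have hm : m.support.sup id < N := by omega
  have hm' : m'.support.sup id < N := by omega
  have hmm' : (m + m').support.sup id < N := by
    have h1 : (m + m').support.sup id ≤ (m.support ∪ m'.support).sup id :=
      Finset.sup_mono Finsupp.support_add
    rw [Finset.sup_union] at h1
    have h2 : m.support.sup id ⊔ m'.support.sup id ≤
        m.support.sup id + m'.support.sup id :=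
      sup_le (Nat.le_add_right _ _) (Nat.le_add_left _ _)
    omega
  rw [Dmon_eq_foldr q b m N hm, Dmon_eq_foldr q b m' N hm',
    Dmon_eq_foldr q b (m + m') N hmm']
  generalize List.range N = l
  induction l with
  | nil => rw [List.foldr_nil, List.foldr_nil, List.foldr_nil, one_Dmul]
  | cons i t ih =>
    rw [List.foldr_cons, List.foldr_cons, List.foldr_cons, ih, Finsupp.add_apply,
      Dpow_add, Dmul_mul_mul]

lemma Dmon_single (q : k) (b : ℕ → ℕ) (i a : ℕ) :
    Dmon q b (Finsupp.single i a) = Dpow q (Finsupp.single (b i) (1 : k)) a := by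
  by_cases ha : a = 0
  · subst ha
    rw [Finsupp.single_zero, Dmon_zero, Dpow]
  · unfold Dmon
    rw [Finsupp.support_single_ne_zero i ha, Finset.sup_singleton, id]
    rw [List.range_succ, List.foldr_append, List.foldr_cons, List.foldr_nil,
      Finsupp.single_eq_same, Dmul_one]
    exact foldr_const q b _ (List.range i) _ fun j hj =>
      Finsupp.single_eq_of_ne (by have := List.mem_range.mp hj; omega)

lemma bSeq_e_pos (hw0 : 0 < w) (hl : 1 < ℓ) (i : ℕ) :
    1 < bSeq w ℓ (i + 1) / bSeq w ℓ i := by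
  cases i with
  | zero => rw [bSeq_e_zero]; exact bSeq_one_gt hw0 hl
  | succ i => rw [bSeq_e_succ hw0 hl]; omega

lemma bSeq_succ_dvd (hw0 : 0 < w) {i j : ℕ} (h : i ≤ j) :
    bSeq w ℓ (i + 1) ∣ bSeq w ℓ (j + 1) := by
  rw [bSeq_succ hw0 i, bSeq_succ hw0 j]
  exact mul_dvd_mul_left _ (pow_dvd_pow ℓ h)

lemma Dmon_reduced (hq : q ≠ 0) (hw : orderOf q = w) (hw0 : 0 < w) (hp : ℓ.Prime) :
    ∀ n : ℕ, ∀ m : ℕ →₀ ℕ, m.support.card = n → RedB w ℓ m →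
    ∃ c : k, c ≠ 0 ∧ Dmon q (bSeq w ℓ) m = Finsupp.single (valB w ℓ m) c := by
  have hl : 1 < ℓ := hp.one_lt
  intro n
  induction n with
  | zero =>
    intro m hcard _
    rw [Finsupp.card_support_eq_zero.mp hcard]
    refine ⟨1, one_ne_zero, ?_⟩
    have hv : valB w ℓ 0 = 0 := by unfold valB; rw [Finsupp.sum_zero_index]
    rw [Dmon_zero, hv]
  | succ n ih =>
    intro m hcard hred
    have hne : m.support.Nonempty := by
      rw [← Finset.card_pos, hcard]; omega
    set i := m.support.min' hne with hi
    have him : i ∈ m.support := Finset.min'_mem _ _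
    have hdec : Finsupp.single i (m i) + Finsupp.erase i m = m :=
      Finsupp.single_add_erase i m
    have herase_card : (Finsupp.erase i m).support.card = n := by
      rw [Finsupp.support_erase, Finset.card_erase_of_mem him, hcard]
      omega
    have herase_red : RedB w ℓ (Finsupp.erase i m) := by
      intro j
      by_cases hji : j = i
      · rw [hji, Finsupp.erase_same]
        have := bSeq_e_pos (w := w) (ℓ := ℓ) hw0 hl i
        omega
      · rw [Finsupp.erase_ne hji]
        exact hred j
    obtain ⟨c', hc'ne, hc'⟩ := ih (Finsupp.erase i m) herase_card herase_red
    obtain ⟨c₀, hc₀, hc₀ne⟩ := Dpow_single q (bSeq w ℓ i) (m i)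
    have hc₀ne' : c₀ ≠ 0 := hc₀ne fun j hj =>
      keyNZ1 hq hw hw0 hp i j (by have := hred i; omega)
    -- divisibility of valB of erase
    have hdvd : bSeq w ℓ (i + 1) ∣ valB w ℓ (Finsupp.erase i m) := by
      unfold valB Finsupp.sum
      refine Finset.dvd_sum ?_
      intro j hj
      rw [Finsupp.support_erase] at hj
      have hji : j ≠ i := Finset.ne_of_mem_erase hj
      have hjm : j ∈ m.support := Finset.mem_of_mem_erase hj
      have hij : i < j := lt_of_le_of_ne (Finset.min'_le _ j hjm) (Ne.symm hji)
      obtain ⟨j', rfl⟩ : ∃ j', j = j' + 1 := ⟨j - 1, by omega⟩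
      exact Dvd.dvd.mul_left (bSeq_succ_dvd hw0 (by omega)) _
    obtain ⟨t, ht⟩ := hdvd
    have hβ : qBinom k q (m i * bSeq w ℓ i + valB w ℓ (Finsupp.erase i m))
        (m i * bSeq w ℓ i) ≠ 0 := by
      rw [ht]
      exact keyNZ2 hq hw hw0 hp i (m i) t (hred i)
    refine ⟨qBinom k q (m i * bSeq w ℓ i + valB w ℓ (Finsupp.erase i m))
        (m i * bSeq w ℓ i) * c' * c₀, by exact mul_ne_zero (mul_ne_zero hβ hc'ne) hc₀ne', ?_⟩
    have hval : valB w ℓ m = m i * bSeq w ℓ i + valB w ℓ (Finsupp.erase i m) := by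
      conv_lhs => rw [← hdec]
      rw [valB_add, valB_single]
    conv_lhs => rw [← hdec]
    rw [Dmon_add, Dmon_single, hc₀, hc', Dmul_single, hval]

lemma Dmon_gen_zero (hq : q ≠ 0) (hw : orderOf q = w) (hw0 : 0 < w) (hp : ℓ.Prime) (i : ℕ) :
    Dmon q (bSeq w ℓ) (Finsupp.single i (bSeq w ℓ (i + 1) / bSeq w ℓ i)) = 0 := by
  rw [Dmon_single]
  refine Dpow_single_eq_zero q _ _ (by have := bSeq_e_pos (w := w) (ℓ := ℓ) hw0 hp.one_lt i; omega) ?_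
  rw [mul_comm (bSeq w ℓ (i + 1) / bSeq w ℓ i) (bSeq w ℓ i), bSeq_mul_e hw0 hp.one_lt i]
  exact keyZ hq hw hw0 hp i
end Part8
section Part9
open MvPolynomial
variable {k : Type*} [Field k] {q : k} {w ℓ : ℕ} [CharP k ℓ]

noncomputable def phiD (q : k) (b : ℕ → ℕ) (p : MvPolynomial ℕ k) : ℕ →₀ k :=
  ∑ m ∈ p.support, p.coeff m • Dmon q b m

lemma phiD_eq_sum_subset (q : k) (b : ℕ → ℕ) (p : MvPolynomial ℕ k) {s : Finset (ℕ →₀ ℕ)}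
    (hs : p.support ⊆ s) : phiD q b p = ∑ m ∈ s, p.coeff m • Dmon q b m := by
  unfold phiD
  refine Finset.sum_subset hs ?_
  intro m _ hm
  rw [MvPolynomial.notMem_support_iff.mp hm, zero_smul]

lemma phiD_zero (q : k) (b : ℕ → ℕ) : phiD q b 0 = 0 := by
  unfold phiD
  rw [MvPolynomial.support_zero, Finset.sum_empty]

lemma phiD_add (q : k) (b : ℕ → ℕ) (p p' : MvPolynomial ℕ k) :
    phiD q b (p + p') = phiD q b p + phiD q b p' := by
  classical
  set s := p.support ∪ p'.support ∪ (p + p').support with hs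
  rw [phiD_eq_sum_subset q b p (s := s)
      (Finset.subset_union_left.trans Finset.subset_union_left),
    phiD_eq_sum_subset q b p' (s := s)
      (Finset.subset_union_right.trans Finset.subset_union_left),
    phiD_eq_sum_subset q b (p + p') (s := s) Finset.subset_union_right,
    ← Finset.sum_add_distrib]
  refine Finset.sum_congr rfl fun m _ => ?_
  rw [MvPolynomial.coeff_add, add_smul]

lemma phiD_smul (q : k) (b : ℕ → ℕ) (c : k) (p : MvPolynomial ℕ k) :
    phiD q b (c • p) = c • phiD q b p := by
  rw [phiD_eq_sum_subset q b (c • p) (MvPolynomial.support_smul)]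
  unfold phiD
  rw [Finset.smul_sum]
  exact Finset.sum_congr rfl fun m _ => by
    rw [MvPolynomial.coeff_smul, smul_eq_mul, mul_smul]

lemma phiD_monomial (q : k) (b : ℕ → ℕ) (m : ℕ →₀ ℕ) (c : k) :
    phiD q b (MvPolynomial.monomial m c) = c • Dmon q b m := by
  classical
  by_cases hc : c = 0
  · subst hc
    rw [map_zero, phiD_zero, zero_smul]
  · unfold phiD
    rw [MvPolynomial.support_monomial, if_neg hc, Finset.sum_singleton,
      MvPolynomial.coeff_monomial, if_pos rfl]

lemma phiD_mul (q : k) (b : ℕ → ℕ) (p p' : MvPolynomial ℕ k) :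
    phiD q b (p * p') = Dmul q (phiD q b p) (phiD q b p') := by
  induction p using MvPolynomial.induction_on' with
  | add p₁ p₂ h1 h2 => rw [add_mul, phiD_add, phiD_add, h1, h2, Dmul_add_left]
  | monomial m c =>
    induction p' using MvPolynomial.induction_on' with
    | add p₁ p₂ h1 h2 => rw [mul_add, phiD_add, phiD_add, h1, h2, Dmul_add_right]
    | monomial m' c' =>
      rw [MvPolynomial.monomial_mul, phiD_monomial, phiD_monomial, phiD_monomial,
        Dmon_add, Dmul_smul_left, Dmul_smul_right, smul_smul]

lemma phiD_one (q : k) (b : ℕ → ℕ) : phiD q b 1 = Finsupp.single 0 1 := by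
  have h1 : (1 : MvPolynomial ℕ k) = MvPolynomial.monomial 0 1 := by
    rw [MvPolynomial.monomial_zero']
    exact (map_one MvPolynomial.C).symm
  rw [h1, phiD_monomial, Dmon_zero, one_smul]

lemma phiD_ideal (hq : q ≠ 0) (hw : orderOf q = w) (hw0 : 0 < w) (hp : ℓ.Prime)
    {p : MvPolynomial ℕ k}
    (hmem : p ∈ Ideal.span (Set.range fun i : ℕ =>
      (MvPolynomial.X i : MvPolynomial ℕ k) ^ (bSeq w ℓ (i + 1) / bSeq w ℓ i))) :
    phiD q (bSeq w ℓ) p = 0 := by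
  refine Submodule.span_induction ?_ ?_ ?_ ?_ hmem
  · rintro x ⟨i, rfl⟩
    show phiD q (bSeq w ℓ)
      (MvPolynomial.X i ^ (bSeq w ℓ (i + 1) / bSeq w ℓ i)) = 0
    rw [MvPolynomial.X_pow_eq_monomial, phiD_monomial, Dmon_gen_zero hq hw hw0 hp, smul_zero]
  · exact phiD_zero q _
  · intro x y _ _ hx hy
    rw [phiD_add, hx, hy, add_zero]
  · intro a x _ hx
    rw [smul_eq_mul, phiD_mul, hx, Dmul_zero_right]

lemma phiD_inj_core (hq : q ≠ 0) (hw : orderOf q = w) (hw0 : 0 < w) (hp : ℓ.Prime)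
    (p : MvPolynomial ℕ k) (hphi : phiD q (bSeq w ℓ) p = 0) :
    p ∈ Ideal.span (Set.range fun i : ℕ =>
      (MvPolynomial.X i : MvPolynomial ℕ k) ^ (bSeq w ℓ (i + 1) / bSeq w ℓ i)) := by
  classical
  set I := Ideal.span (Set.range fun i : ℕ =>
      (MvPolynomial.X i : MvPolynomial ℕ k) ^ (bSeq w ℓ (i + 1) / bSeq w ℓ i)) with hI
  set S := p.support.filter (fun m => RedB w ℓ m) with hS
  set pr : MvPolynomial ℕ k := ∑ m ∈ S, MvPolynomial.monomial m (p.coeff m) with hpr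
  set pb : MvPolynomial ℕ k :=
    ∑ m ∈ p.support.filter (fun m => ¬ RedB w ℓ m), MvPolynomial.monomial m (p.coeff m)
    with hpb
  have hsplit : p = pr + pb := by
    rw [hpr, hpb, Finset.sum_filter_add_sum_filter_not]
    exact MvPolynomial.as_sum p
  have hpbI : pb ∈ I := by
    rw [hpb]
    refine Ideal.sum_mem I ?_
    intro m hm
    obtain ⟨_, hmred⟩ := Finset.mem_filter.mp hm
    unfold RedB at hmred
    push_neg at hmred
    obtain ⟨i, hi⟩ := hmred
    have hle : Finsupp.single i (bSeq w ℓ (i + 1) / bSeq w ℓ i) ≤ m :=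
      Finsupp.single_le_iff.mpr hi
    have hfac : MvPolynomial.monomial m (p.coeff m)
        = MvPolynomial.monomial (m - Finsupp.single i (bSeq w ℓ (i + 1) / bSeq w ℓ i))
            (p.coeff m)
          * MvPolynomial.monomial (Finsupp.single i (bSeq w ℓ (i + 1) / bSeq w ℓ i)) 1 := by
      rw [MvPolynomial.monomial_mul, mul_one, tsub_add_cancel_of_le hle]
    rw [hfac]
    refine Ideal.mul_mem_left I _ ?_
    rw [← MvPolynomial.X_pow_eq_monomial]
    exact Ideal.subset_span ⟨i, rfl⟩
  -- phiD pr = 0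
  have hphipb : phiD q (bSeq w ℓ) pb = 0 := phiD_ideal hq hw hw0 hp hpbI
  have hphipr : phiD q (bSeq w ℓ) pr = 0 := by
    have := phiD_add q (bSeq w ℓ) pr pb
    rw [← hsplit, hphi, hphipb, add_zero] at this
    exact this.symm
  -- rewrite phiD pr as a sum of singles
  have hredS : ∀ m ∈ S, RedB w ℓ m := fun m hm => (Finset.mem_filter.mp hm).2
  have hDmon : ∀ m ∈ S, ∃ c : k, c ≠ 0 ∧
      Dmon q (bSeq w ℓ) m = Finsupp.single (valB w ℓ m) c := fun m hm =>
    Dmon_reduced hq hw hw0 hp m.support.card m rfl (hredS m hm)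
  choose! cf hcfne hcfeq using hDmon
  have hprsum : phiD q (bSeq w ℓ) pr
      = ∑ m ∈ S, p.coeff m • Finsupp.single (valB w ℓ m) (cf m) := by
    have hphisum : phiD q (bSeq w ℓ) pr = ∑ m ∈ S, phiD q (bSeq w ℓ)
        (MvPolynomial.monomial m (p.coeff m)) := by
      rw [hpr]
      induction S using Finset.induction_on with
      | empty => rw [Finset.sum_empty, Finset.sum_empty, phiD_zero]
      | insert a s hnotmem ih =>
        rw [Finset.sum_insert hnotmem, Finset.sum_insert hnotmem, phiD_add, ih]
    rw [hphisum]
    refine Finset.sum_congr rfl fun m hm => ?_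
    rw [phiD_monomial, hcfeq m hm]
  -- coefficients vanish
  have hcoeff : ∀ m ∈ S, p.coeff m = 0 := by
    intro m₀ hm₀
    have happ := congrArg (fun f : ℕ →₀ k => f (valB w ℓ m₀)) (hprsum ▸ hphipr)
    simp only [Finsupp.coe_zero, Pi.zero_apply] at happ
    rw [Finsupp.finset_sum_apply] at happ
    rw [Finset.sum_eq_single m₀] at happ
    · rw [Finsupp.smul_apply, Finsupp.single_eq_same, smul_eq_mul] at happ
      rcases mul_eq_zero.mp happ with h | h
      · exact h
      · exact absurd h (hcfne m₀ hm₀)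
    · intro m hm hne
      rw [Finsupp.smul_apply, Finsupp.single_apply,
        if_neg (fun hv => hne (valB_inj hw0 hp.one_lt m m₀ (hredS m hm) (hredS m₀ hm₀) hv)),
        smul_zero]
    · intro h
      exact absurd hm₀ h
  have hpr0 : pr = 0 := by
    rw [hpr]
    refine Finset.sum_eq_zero fun m hm => ?_
    rw [hcoeff m hm, map_zero]
  rw [hsplit, hpr0, zero_add]
  exact hpbI

lemma phiD_surj_core (hq : q ≠ 0) (hw : orderOf q = w) (hw0 : 0 < w) (hp : ℓ.Prime)
    (d : ℕ →₀ k) : ∃ p : MvPolynomial ℕ k, phiD q (bSeq w ℓ) p = d := by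
  induction d using Finsupp.induction_linear with
  | zero => exact ⟨0, phiD_zero q _⟩
  | add f g hf hg =>
    obtain ⟨p₁, hp₁⟩ := hf
    obtain ⟨p₂, hp₂⟩ := hg
    exact ⟨p₁ + p₂, by rw [phiD_add, hp₁, hp₂]⟩
  | single n c =>
    obtain ⟨m, hred, hval⟩ := exists_red hw0 hp.one_lt n
    obtain ⟨cm, hcmne, hcm⟩ := Dmon_reduced hq hw hw0 hp m.support.card m rfl hred
    refine ⟨MvPolynomial.monomial m (c * cm⁻¹), ?_⟩
    rw [phiD_monomial, hcm, Finsupp.smul_single, smul_eq_mul, hval, mul_assoc,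
      inv_mul_cancel₀ hcmne, mul_one]
end Part9

/-- Let `k` be a field of characteristic `ℓ > 0` and `q ∈ k` a root of unity of order `w`,
and let `b` be the associated sequence. Then the `k`-algebra homomorphism
`k[y_0, y_1, …]/(y_i^{b_{i+1}/b_i}) → D` given by `y_i ↦ x^{[b_i]}` is an isomorphism
onto the `q`-divided power algebra `D` (realized as `ℕ →₀ k` with multiplication `Dmul`). -/
theorem qdp_presentation {k : Type*} [Field k] (ℓ : ℕ) [CharP k ℓ] (hℓ : ℓ ≠ 0)
    (q : k) (hq : q ≠ 0) (w : ℕ) (hw : orderOf q = w) (hw0 : 0 < w) :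
    let b := bSeq w ℓ;
    let I : Ideal (MvPolynomial ℕ k) :=
      Ideal.span (Set.range fun i : ℕ =>
        (MvPolynomial.X i : MvPolynomial ℕ k) ^ (b (i + 1) / b i));
    let φ : MvPolynomial ℕ k → (ℕ →₀ k) := fun p =>
      ∑ m ∈ p.support, p.coeff m • Dmon q b m;
    ∃ ψ : (MvPolynomial ℕ k ⧸ I) →ₗ[k] (ℕ →₀ k),
      (∀ p : MvPolynomial ℕ k, ψ (Ideal.Quotient.mk I p) = φ p) ∧
      (∀ p p' : MvPolynomial ℕ k,
        ψ (Ideal.Quotient.mk I (p * p'))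
          = Dmul q (ψ (Ideal.Quotient.mk I p)) (ψ (Ideal.Quotient.mk I p'))) ∧
      ψ (Ideal.Quotient.mk I 1) = Finsupp.single 0 1 ∧
      Function.Bijective ψ := by
  
  intro b I φ
  haveI : NeZero ℓ := ⟨hℓ⟩
  have hp : ℓ.Prime := (CharP.char_is_prime_of_pos k ℓ).out
  let φL : MvPolynomial ℕ k →ₗ[k] (ℕ →₀ k) :=
    { toFun := phiD q b
      map_add' := phiD_add q b
      map_smul' := fun c p => by
        simp only [RingHom.id_apply]
        exact phiD_smul q b c p }
  have hker : I.restrictScalars k ≤ LinearMap.ker φL := by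
    intro p hmem
    rw [LinearMap.mem_ker]
    show phiD q b p = 0
    exact phiD_ideal hq hw hw0 hp ((Submodule.restrictScalars_mem k I p).mp hmem)
  refine ⟨(Submodule.liftQ (I.restrictScalars k) φL hker).comp
    (Submodule.Quotient.restrictScalarsEquiv k I).symm.toLinearMap, ?_, ?_, ?_, ?_⟩
  case _ =>
    intro p
    show (Submodule.liftQ (I.restrictScalars k) φL hker)
      ((Submodule.Quotient.restrictScalarsEquiv k I).symm (Ideal.Quotient.mk I p)) = φ p
    rw [← Ideal.Quotient.mk_eq_mk, Submodule.Quotient.restrictScalarsEquiv_symm_mk,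
      Submodule.liftQ_apply]
    rfl
  all_goals {
    have hψ : ∀ p : MvPolynomial ℕ k,
        ((Submodule.liftQ (I.restrictScalars k) φL hker).comp
          (Submodule.Quotient.restrictScalarsEquiv k I).symm.toLinearMap)
          (Ideal.Quotient.mk I p) = phiD q b p := by
      intro p
      show (Submodule.liftQ (I.restrictScalars k) φL hker)
        ((Submodule.Quotient.restrictScalarsEquiv k I).symm (Ideal.Quotient.mk I p))
          = phiD q b p
      rw [← Ideal.Quotient.mk_eq_mk, Submodule.Quotient.restrictScalarsEquiv_symm_mk,
        Submodule.liftQ_apply]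
      rfl
    first
    | -- multiplicativity
      (intro p p'
       rw [hψ, hψ, hψ, phiD_mul])
    | -- unit
      (rw [hψ, phiD_one])
    | -- bijectivity
      (constructor
       · refine LinearMap.ker_eq_bot.mp ((Submodule.eq_bot_iff _).mpr ?_)
         intro x hx
         obtain ⟨p, rfl⟩ := Ideal.Quotient.mk_surjective x
         have h0 : phiD q b p = 0 := by
           rw [← hψ p]
           exact hx
         exact Ideal.Quotient.eq_zero_iff_mem.mpr (phiD_inj_core hq hw hw0 hp p h0)
       · intro d
         obtain ⟨p, hpd⟩ := phiD_surj_core hq hw hw0 hp d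
         exact ⟨Ideal.Quotient.mk I p, by rw [hψ]; exact hpd⟩)
  }
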